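/- arXiv:1509.05881 — 6 statements merged into one kernel-verified Lean document; each statement's English description precedes it below -/
import Mathlib

section
/- Along any trajectory of the controlled HKB end-effector model with the given adaptive laws, and with the reference position affine in time with slope v on an interval I, the energy-like function E(t) = ½[(x(t) − r̂(t))² + (y(t) − v)² + e^{2a(t)} + e^{2b(t)}] satisfies E′(t) = −2 η_a E(t) for every t in I, regardless of the choice of the continuous input u. -/
/-- **Energy derivative identity for the adaptive scheme.**
Along any trajectory of the controlled HKB end-effector model with the given
adaptive laws, with the reference position affine in time with slope `v` on an
interval `I`, the energy-like function
`E(t) = ½[(x−r̂)² + (y−v)² + e^{2a} + e^{2b}]` satisfies `E′(t) = −2 ηₐ E(t)`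
for every `t ∈ I`, regardless of the choice of the continuous input `u`. -/
theorem adaptive_energy_derivative_identity
    (α β γ ω ηa v r₀ t₀ : ℝ) (I : Set ℝ)
    (u x y a b : ℝ → ℝ)
    (hu : ContinuousOn u I)
    (hx : ∀ t ∈ I, HasDerivAt x (y t) t)
    (hy : ∀ t ∈ I, HasDerivAt y
      (-(α * (y t) ^ 2 + β * (x t) ^ 2 - γ) * y t - ω ^ 2 * x t + u t) t)
    (ha : ∀ t ∈ I, HasDerivAt a (-Real.exp (-2 * a t) *
      ((x t - (r₀ + v * (t - t₀))) * (y t - v)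
        + ηa * (x t - (r₀ + v * (t - t₀))) ^ 2) - ηa) t)
    (hb : ∀ t ∈ I, HasDerivAt b (Real.exp (-2 * b t) * (y t - v) *
      (ω ^ 2 * x t + (α * (y t) ^ 2 + β * (x t) ^ 2 - γ) * y t
        - ηa * (y t - v) - u t) - ηa) t) :
    ∀ t ∈ I, HasDerivAt
      (fun s => (1 / 2) * ((x s - (r₀ + v * (s - t₀))) ^ 2 + (y s - v) ^ 2
        + Real.exp (2 * a s) + Real.exp (2 * b s)))
      (-2 * ηa * ((1 / 2) * ((x t - (r₀ + v * (t - t₀))) ^ 2 + (y t - v) ^ 2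
        + Real.exp (2 * a t) + Real.exp (2 * b t)))) t := by
  intro t ht
  have hr : HasDerivAt (fun s : ℝ => r₀ + v * (s - t₀)) v t := by
    simpa using ((hasDerivAt_id t).sub_const t₀).const_mul v |>.const_add r₀
  have h1 : HasDerivAt (fun s => (x s - (r₀ + v * (s - t₀))) ^ 2)
      (2 * (x t - (r₀ + v * (t - t₀))) * (y t - v)) t := by
    have := ((hx t ht).sub hr).fun_pow 2
    simpa [mul_comm, mul_assoc, mul_left_comm] using this
  have h2 : HasDerivAt (fun s => (y s - v) ^ 2)
      (2 * (y t - v) * (-(α * (y t) ^ 2 + β * (x t) ^ 2 - γ) * y t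
        - ω ^ 2 * x t + u t)) t := by
    have := ((hy t ht).sub_const v).fun_pow 2
    simpa [mul_comm, mul_assoc, mul_left_comm] using this
  have h3 : HasDerivAt (fun s => Real.exp (2 * a s))
      (Real.exp (2 * a t) * (2 * (-Real.exp (-2 * a t) *
        ((x t - (r₀ + v * (t - t₀))) * (y t - v)
          + ηa * (x t - (r₀ + v * (t - t₀))) ^ 2) - ηa))) t := by
    have := (((ha t ht).const_mul 2).exp)
    simpa [mul_comm] using this
  have h4 : HasDerivAt (fun s => Real.exp (2 * b s))
      (Real.exp (2 * b t) * (2 * (Real.exp (-2 * b t) * (y t - v) *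
        (ω ^ 2 * x t + (α * (y t) ^ 2 + β * (x t) ^ 2 - γ) * y t
          - ηa * (y t - v) - u t) - ηa))) t := by
    have := (((hb t ht).const_mul 2).exp)
    simpa [mul_comm] using this
  have h := (((h1.add h2).add h3).add h4).const_mul (1 / 2 : ℝ)
  refine h.congr_deriv ?_
  have ea : Real.exp (-2 * a t) = (Real.exp (2 * a t))⁻¹ := by
    rw [show (-2 : ℝ) * a t = -(2 * a t) by ring, Real.exp_neg]
  have eb : Real.exp (-2 * b t) = (Real.exp (2 * b t))⁻¹ := by
    rw [show (-2 : ℝ) * b t = -(2 * b t) by ring, Real.exp_neg]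
  rw [ea, eb]
  field_simp
  ring
end

section
/- Under the hypotheses of the adaptive control tracking theorem (gain condition η_a > (ln 2)/(2T)), the position error satisfies lim sup_{t→∞} |x(t) − r̂_p(t)| ≤ e^{η_a T}·√(2ε/(e^{2η_a T} − 2)); that is, the asymptotic tracking error bound is independent of the initial energy E(0). -/
open Filter Set

set_option maxHeartbeats 1000000

/-- Estimated sampled velocity sequence. -/
private noncomputable def auxC (rp : ℝ → ℝ) (T v₀ : ℝ) : ℕ → ℝ
  | 0 => v₀
  | (k+1) => (rp (((k : ℝ) + 1) * T) - rp ((k : ℝ) * T)) / T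

/-- Lyapunov-type energy on the `k`-th sampling interval. -/
private noncomputable def auxE (x y a b rp : ℝ → ℝ) (T v₀ : ℝ) (k : ℕ) (s : ℝ) : ℝ :=
  (x s - rp ((k : ℝ) * T) - auxC rp T v₀ k * (s - (k : ℝ) * T)) ^ 2
    + (y s - auxC rp T v₀ k) ^ 2 + Real.exp (2 * a s) + Real.exp (2 * b s)

/-- A function continuous on `[A,B]` with vanishing derivative on `(A,B)` is constant. -/
private lemma aux_const_of_deriv_zero {f : ℝ → ℝ} {A B : ℝ} (hAB : A ≤ B)
    (hc : ContinuousOn f (Set.Icc A B))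
    (hd : ∀ t ∈ Set.Ioo A B, HasDerivAt f 0 t) :
    ∀ t ∈ Set.Icc A B, f t = f A := by
  intro t ht
  have hdiff : DifferentiableOn ℝ f (interior (Set.Icc A B)) := by
    rw [interior_Icc]
    exact fun s hs => ((hd s hs).differentiableAt).differentiableWithinAt
  have hmono : MonotoneOn f (Set.Icc A B) :=
    monotoneOn_of_deriv_nonneg (convex_Icc A B) hc hdiff (fun s hs => by
      rw [interior_Icc] at hs; rw [(hd s hs).deriv])
  have hanti : AntitoneOn f (Set.Icc A B) :=
    antitoneOn_of_deriv_nonpos (convex_Icc A B) hc hdiff (fun s hs => by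
      rw [interior_Icc] at hs; rw [(hd s hs).deriv])
  have hA : A ∈ Set.Icc A B := ⟨le_refl A, hAB⟩
  exact le_antisymm (hanti hA ht ht.1) (hmono hA ht ht.1)

/-- **Asymptotic adaptive control tracking bound.**
Under the adaptive control scheme for the HKB end-effector model with the gain
condition `ηₐ > (ln 2)/(2T)`, the position error satisfies
`limsup_{t→∞} |x(t) − r̂ₚ(t)| ≤ e^{ηₐT} √(2ε/(e^{2ηₐT} − 2))`;
the asymptotic bound is independent of the initial energy `E(0)`. -/
theorem adaptive_control_asymptotic_tracking_bound
    (T α β γ ω Cp δ ηa v₀ : ℝ) (hT : 0 < T)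
    (rp rv rphat x y a b : ℝ → ℝ)
    -- estimated velocity: constant v₀ on [0,T), finite difference afterwards
    (hrv0 : ∀ t ∈ Set.Ico (0 : ℝ) T, rv t = v₀)
    (hrv : ∀ k : ℕ, 1 ≤ k → ∀ t ∈ Set.Ico ((k : ℝ) * T) (((k : ℝ) + 1) * T),
      rv t = (rp ((k : ℝ) * T) - rp (((k : ℝ) - 1) * T)) / T)
    -- predicted position
    (hrp : ∀ k : ℕ, ∀ t ∈ Set.Ico ((k : ℝ) * T) (((k : ℝ) + 1) * T),
      rphat t = rp ((k : ℝ) * T) + rv t * (t - (k : ℝ) * T))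
    -- continuity of the state and adaptive parameters on [0,∞)
    (hxc : ContinuousOn x (Set.Ici 0)) (hyc : ContinuousOn y (Set.Ici 0))
    (hac : ContinuousOn a (Set.Ici 0)) (hbc : ContinuousOn b (Set.Ici 0))
    -- controlled HKB dynamics with the adaptive feedback controller and
    -- adaptive laws for the coupling parameters, on each open sampling interval
    (hdyn : ∀ k : ℕ, ∀ t ∈ Set.Ioo ((k : ℝ) * T) (((k : ℝ) + 1) * T),
      HasDerivAt x (y t) t ∧
      HasDerivAt y (-(α * (y t) ^ 2 + β * (x t) ^ 2 - γ) * y t - ω ^ 2 * x t +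
        ((a t + b t * (x t - rphat t) ^ 2) * (y t - rv t)
          - Cp * Real.exp (-δ * (y t - rv t) ^ 2) * (x t - rphat t))) t ∧
      HasDerivAt a (-Real.exp (-2 * a t) *
        ((x t - rphat t) * (y t - rv t) + ηa * (x t - rphat t) ^ 2) - ηa) t ∧
      HasDerivAt b (Real.exp (-2 * b t) * (y t - rv t) *
        (ω ^ 2 * x t + (α * (y t) ^ 2 + β * (x t) ^ 2 - γ) * y t - ηa * (y t - rv t)
          - ((a t + b t * (x t - rphat t) ^ 2) * (y t - rv t)
            - Cp * Real.exp (-δ * (y t - rv t) ^ 2) * (x t - rphat t))) - ηa) t)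
    (ε : ℝ)
    -- ε is the (finite) supremum of the sampling jump terms over k ≥ 1
    (hε : IsLUB (Set.range fun k : ℕ =>
      (T ^ 2 + 1) * (rv (((k : ℝ) + 1) * T) - rv ((k : ℝ) * T)) ^ 2) ε)
    -- gain condition
    (hηa : ηa > Real.log 2 / (2 * T)) :
    Filter.limsup (fun t => |x t - rphat t|) Filter.atTop ≤
      Real.exp (ηa * T) * Real.sqrt (2 * ε / (Real.exp (2 * ηa * T) - 2)) := by
  have hT' : T ≠ 0 := ne_of_gt hT
  -- basic positivity facts
  have hηa0 : 0 < ηa :=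
    lt_of_le_of_lt (le_of_lt (div_pos (Real.log_pos one_lt_two) (by linarith))) hηa
  have hE2 : 2 < Real.exp (2 * ηa * T) := by
    have h1 : Real.log 2 < 2 * ηa * T := by
      have := (div_lt_iff₀ (by linarith : (0:ℝ) < 2 * T)).mp hηa
      nlinarith
    calc (2:ℝ) = Real.exp (Real.log 2) := (Real.exp_log two_pos).symm
    _ < Real.exp (2 * ηa * T) := Real.exp_lt_exp.mpr h1
  set q : ℝ := Real.exp (-(2 * ηa) * T) with hqdef
  have hq0 : 0 < q := Real.exp_pos _
  have hqinv : q = (Real.exp (2 * ηa * T))⁻¹ := by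
    rw [hqdef, show -(2 * ηa) * T = -(2 * ηa * T) by ring, Real.exp_neg]
  have h2q1 : 2 * q < 1 := by
    rw [hqinv]
    rw [mul_inv_lt_iff₀ (by positivity)]
    linarith
  -- the sampled velocity sequence
  have hrvc : ∀ (k : ℕ), ∀ t ∈ Set.Ico ((k : ℝ) * T) (((k : ℝ) + 1) * T),
      rv t = auxC rp T v₀ k := by
    intro k t ht
    cases k with
    | zero => simpa [auxC] using hrv0 t (by simpa using ht)
    | succ n =>
      have h := hrv (n + 1) (by omega) t ht
      push_cast at h
      rw [show ((n : ℝ) + 1) - 1 = (n : ℝ) by ring] at h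
      simpa [auxC] using h
  have hεk : ∀ k : ℕ, (T ^ 2 + 1) * (auxC rp T v₀ (k + 1) - auxC rp T v₀ k) ^ 2 ≤ ε := by
    intro k
    have hmem : ((k : ℝ) + 1) * T ∈
        Set.Ico (((k + 1 : ℕ) : ℝ) * T) ((((k + 1 : ℕ) : ℝ) + 1) * T) := by
      constructor
      · push_cast; exact le_rfl
      · push_cast; nlinarith
    have h1 : rv (((k : ℝ) + 1) * T) = auxC rp T v₀ (k + 1) := hrvc (k + 1) _ hmem
    have h2 : rv ((k : ℝ) * T) = auxC rp T v₀ k :=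
      hrvc k _ ⟨le_refl _, by nlinarith [Nat.cast_nonneg (α := ℝ) k]⟩
    have h3 := hε.1 (Set.mem_range_self k)
    rw [h1, h2] at h3
    exact h3
  have hε0 : 0 ≤ ε := le_trans (by positivity) (hεk 0)
  -- nonnegativity of the energy
  have hEnonneg : ∀ (k : ℕ) (s : ℝ), 0 ≤ auxE x y a b rp T v₀ k s := by
    intro k s
    unfold auxE
    positivity
  -- the energy decays exponentially on each sampling interval
  have hderiv : ∀ (k : ℕ), ∀ t ∈ Set.Ioo ((k : ℝ) * T) (((k : ℝ) + 1) * T),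
      HasDerivAt (auxE x y a b rp T v₀ k) (-(2 * ηa) * auxE x y a b rp T v₀ k t) t := by
    intro k t ht
    obtain ⟨hx', hy', ha', hb'⟩ := hdyn k t ht
    have htIco : t ∈ Set.Ico ((k : ℝ) * T) (((k : ℝ) + 1) * T) := ⟨ht.1.le, ht.2⟩
    have hrvt : rv t = auxC rp T v₀ k := hrvc k t htIco
    have hrpt : rphat t = rp ((k : ℝ) * T) + auxC rp T v₀ k * (t - (k : ℝ) * T) := by
      rw [hrp k t htIco, hrvt]
    rw [hrvt, hrpt] at hy' ha' hb'
    have h1 : HasDerivAt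
        (fun s => x s - rp ((k : ℝ) * T) - auxC rp T v₀ k * (s - (k : ℝ) * T))
        (y t - auxC rp T v₀ k * 1) t :=
      (hx'.sub_const _).sub (((hasDerivAt_id t).sub_const _).const_mul _)
    have h2 := h1.pow 2
    have h3 := (hy'.sub_const (auxC rp T v₀ k)).pow 2
    have h4 := (ha'.const_mul 2).exp
    have h5 := (hb'.const_mul 2).exp
    have hsum := ((h2.add h3).add h4).add h5
    refine hsum.congr_deriv ?_
    unfold auxE
    rw [show (-2 : ℝ) * a t = -(2 * a t) by ring, show (-2 : ℝ) * b t = -(2 * b t) by ring,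
      Real.exp_neg, Real.exp_neg]
    field_simp
    ring
  have hcont : ∀ k : ℕ, ContinuousOn (auxE x y a b rp T v₀ k)
      (Set.Icc ((k : ℝ) * T) (((k : ℝ) + 1) * T)) := by
    intro k
    have hsub : Set.Icc ((k : ℝ) * T) (((k : ℝ) + 1) * T) ⊆ Set.Ici (0 : ℝ) :=
      fun s hs => le_trans (by positivity) hs.1
    unfold auxE
    apply ContinuousOn.add
    apply ContinuousOn.add
    apply ContinuousOn.add
    · exact (((hxc.mono hsub).sub continuousOn_const).sub
        ((continuous_const.mul (continuous_id.sub continuous_const)).continuousOn)).pow 2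
    · exact ((hyc.mono hsub).sub continuousOn_const).pow 2
    · exact (continuousOn_const.mul (hac.mono hsub)).rexp
    · exact (continuousOn_const.mul (hbc.mono hsub)).rexp
  have hdecay : ∀ (k : ℕ), ∀ t ∈ Set.Icc ((k : ℝ) * T) (((k : ℝ) + 1) * T),
      auxE x y a b rp T v₀ k t
        = auxE x y a b rp T v₀ k ((k : ℝ) * T) * Real.exp (-(2 * ηa) * (t - (k : ℝ) * T)) := by
    intro k t ht
    have hAB : (k : ℝ) * T ≤ ((k : ℝ) + 1) * T := by nlinarith
    have hGc : ContinuousOn (fun s => auxE x y a b rp T v₀ k s * Real.exp (2 * ηa * s))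
        (Set.Icc ((k : ℝ) * T) ((((k : ℝ)) + 1) * T)) :=
      (hcont k).mul ((continuous_const.mul continuous_id).rexp.continuousOn)
    have hGd : ∀ s ∈ Set.Ioo ((k : ℝ) * T) (((k : ℝ) + 1) * T),
        HasDerivAt (fun s => auxE x y a b rp T v₀ k s * Real.exp (2 * ηa * s)) 0 s := by
      intro s hs
      have hexp : HasDerivAt (fun s => Real.exp (2 * ηa * s))
          (Real.exp (2 * ηa * s) * (2 * ηa)) s := by
        simpa using ((hasDerivAt_id s).const_mul (2 * ηa)).exp
      have := (hderiv k s hs).mul hexp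
      refine this.congr_deriv ?_
      ring
    have h := aux_const_of_deriv_zero hAB hGc hGd t ht
    have hne : Real.exp (2 * ηa * t) ≠ 0 := Real.exp_ne_zero _
    rw [show -(2 * ηa) * (t - (k : ℝ) * T) = 2 * ηa * ((k : ℝ) * T) - 2 * ηa * t by ring,
      Real.exp_sub]
    field_simp
    linear_combination (norm := ring_nf) h
  -- jump estimate at sampling instants
  have hjump : ∀ k : ℕ, auxE x y a b rp T v₀ (k + 1) (((k : ℝ) + 1) * T)
      ≤ 2 * auxE x y a b rp T v₀ k (((k : ℝ) + 1) * T) + 2 * ε := by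
    intro k
    have hrpd : rp (((k : ℝ) + 1) * T) = rp ((k : ℝ) * T) + auxC rp T v₀ (k + 1) * T := by
      simp only [auxC]
      rw [div_mul_cancel₀ _ hT']
      ring
    have hd := hεk k
    unfold auxE
    push_cast
    rw [hrpd]
    nlinarith [sq_nonneg ((x (((k:ℝ)+1)*T) - rp ((k:ℝ)*T) - auxC rp T v₀ k * T)
        + T * (auxC rp T v₀ (k+1) - auxC rp T v₀ k)),
      sq_nonneg ((y (((k:ℝ)+1)*T) - auxC rp T v₀ k) + (auxC rp T v₀ (k+1) - auxC rp T v₀ k)),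
      Real.exp_pos (2 * a (((k:ℝ)+1)*T)), Real.exp_pos (2 * b (((k:ℝ)+1)*T))]
  -- the discrete recursion for the start-of-interval energies
  set F : ℕ → ℝ := fun k => auxE x y a b rp T v₀ k ((k : ℝ) * T) with hFdef
  have hF0 : ∀ k, 0 ≤ F k := fun k => hEnonneg k _
  have hFend : ∀ k : ℕ, auxE x y a b rp T v₀ k (((k : ℝ) + 1) * T) = F k * q := by
    intro k
    have hmem : ((k : ℝ) + 1) * T ∈ Set.Icc ((k : ℝ) * T) (((k : ℝ) + 1) * T) := by
      constructor
      · nlinarith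
      · exact le_rfl
    have h := hdecay k _ hmem
    rw [show -(2 * ηa) * (((k : ℝ) + 1) * T - (k : ℝ) * T) = -(2 * ηa) * T by ring] at h
    rw [h, hqdef]
  have hrec : ∀ k : ℕ, F (k + 1) ≤ 2 * q * F k + 2 * ε := by
    intro k
    have h1 : F (k + 1) = auxE x y a b rp T v₀ (k + 1) (((k : ℝ) + 1) * T) := by
      rw [hFdef]
      push_cast
      rfl
    rw [h1]
    calc auxE x y a b rp T v₀ (k + 1) (((k : ℝ) + 1) * T)
        ≤ 2 * auxE x y a b rp T v₀ k (((k : ℝ) + 1) * T) + 2 * ε := hjump k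
    _ = 2 * q * F k + 2 * ε := by rw [hFend k]; ring
  set L : ℝ := 2 * ε / (1 - 2 * q) with hLdef
  have h2q0 : (0:ℝ) < 1 - 2 * q := by linarith
  have hL0 : 0 ≤ L := by positivity
  have hLfix : 2 * q * L + 2 * ε = L := by
    rw [hLdef]
    field_simp
    ring
  have hFbound : ∀ k : ℕ, F k ≤ (2 * q) ^ k * F 0 + L := by
    intro k
    induction k with
    | zero => simpa using by linarith [hL0]
    | succ n ih =>
      calc F (n + 1) ≤ 2 * q * F n + 2 * ε := hrec n
      _ ≤ 2 * q * ((2 * q) ^ n * F 0 + L) + 2 * ε := by nlinarith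
      _ = (2 * q) ^ (n + 1) * F 0 + (2 * q * L + 2 * ε) := by ring
      _ = (2 * q) ^ (n + 1) * F 0 + L := by rw [hLfix]
  -- pointwise bound inside each interval
  have hpt : ∀ (k : ℕ), ∀ t ∈ Set.Ico ((k : ℝ) * T) (((k : ℝ) + 1) * T),
      |x t - rphat t| ≤ Real.sqrt (F k) := by
    intro k t ht
    have h1 : rphat t = rp ((k : ℝ) * T) + auxC rp T v₀ k * (t - (k : ℝ) * T) := by
      rw [hrp k t ht, hrvc k t ht]
    apply Real.abs_le_sqrt
    have h2 : (x t - rphat t) ^ 2 ≤ auxE x y a b rp T v₀ k t := by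
      rw [h1]
      unfold auxE
      nlinarith [sq_nonneg (y t - auxC rp T v₀ k), (Real.exp_pos (2 * a t)).le,
        (Real.exp_pos (2 * b t)).le]
    have h3 := hdecay k t ⟨ht.1, ht.2.le⟩
    have h4 : Real.exp (-(2 * ηa) * (t - (k : ℝ) * T)) ≤ 1 := by
      rw [Real.exp_le_one_iff]
      nlinarith [ht.1]
    nlinarith [hF0 k]
  -- final limsup estimate
  have hLsqrt : Real.sqrt L = Real.exp (ηa * T) * Real.sqrt (2 * ε / (Real.exp (2 * ηa * T) - 2)) := by
    have hsq : Real.exp (ηa * T) ^ 2 = Real.exp (2 * ηa * T) := by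
      rw [sq, ← Real.exp_add]; congr 1; ring
    have h1 : L = Real.exp (ηa * T) ^ 2 * (2 * ε / (Real.exp (2 * ηa * T) - 2)) := by
      rw [hsq, hLdef, hqinv]
      have hEne : Real.exp (2 * ηa * T) ≠ 0 := Real.exp_ne_zero _
      have hDne : Real.exp (2 * ηa * T) - 2 ≠ 0 := by linarith
      field_simp
    rw [h1, Real.sqrt_mul (sq_nonneg _), Real.sqrt_sq (Real.exp_nonneg _)]
  rw [← hLsqrt]
  apply le_of_forall_pos_le_add
  intro dlt hdlt
  obtain ⟨K, hK⟩ : ∃ K : ℕ, (2 * q) ^ K * F 0 ≤ dlt ^ 2 := by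
    have htend : Tendsto (fun k : ℕ => (2 * q) ^ k * F 0) atTop (nhds 0) := by
      simpa using
        (tendsto_pow_atTop_nhds_zero_of_lt_one (by positivity) h2q1).mul_const (F 0)
    exact (htend.eventually (eventually_le_nhds (by positivity))).exists
  rw [Filter.limsup_eq]
  apply csInf_le
  · refine ⟨0, fun m hm => ?_⟩
    obtain ⟨t, htt⟩ := hm.exists
    exact le_trans (abs_nonneg _) htt
  · show ∀ᶠ t : ℝ in atTop, |x t - rphat t| ≤ Real.sqrt L + dlt
    filter_upwards [eventually_ge_atTop ((K : ℝ) * T)] with t ht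
    have hKT0 : (0:ℝ) ≤ (K : ℝ) * T := by positivity
    have ht0 : (0:ℝ) ≤ t := le_trans hKT0 ht
    have hdiv : (0:ℝ) ≤ t / T := by positivity
    set k : ℕ := ⌊t / T⌋₊ with hkdef
    have h1 : (k : ℝ) * T ≤ t := by
      have := Nat.floor_le hdiv
      calc (k : ℝ) * T ≤ (t / T) * T := by nlinarith
      _ = t := by field_simp
    have h2 : t < ((k : ℝ) + 1) * T := by
      have := Nat.lt_floor_add_one (t / T)
      calc t = (t / T) * T := by field_simp
      _ < ((k : ℝ) + 1) * T := by nlinarith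
    have hKk : K ≤ k := Nat.le_floor (by rw [le_div_iff₀ hT]; exact ht)
    have h3 := hpt k t ⟨h1, h2⟩
    have h4 : F k ≤ dlt ^ 2 + L := by
      have hpow : (2 * q) ^ k ≤ (2 * q) ^ K := pow_le_pow_of_le_one (by positivity) h2q1.le hKk
      have := hFbound k
      nlinarith [hF0 0]
    have h6 : Real.sqrt (F k) ≤ Real.sqrt (dlt ^ 2 + L) := Real.sqrt_le_sqrt h4
    have h7 : Real.sqrt (dlt ^ 2 + L) ≤ dlt + Real.sqrt L := by
      have hs := Real.sq_sqrt hL0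
      have h8 : dlt ^ 2 + L ≤ (dlt + Real.sqrt L) ^ 2 := by
        nlinarith [Real.sqrt_nonneg L]
      calc Real.sqrt (dlt ^ 2 + L) ≤ Real.sqrt ((dlt + Real.sqrt L) ^ 2) := Real.sqrt_le_sqrt h8
      _ = dlt + Real.sqrt L := Real.sqrt_sq (by positivity)
    linarith
end

section
/- Let α, β, γ, ω > 0 and set V(x, y) = (ω² x² + y²)/2. If c₁ > 0 satisfies 2c₁·max(α/ω², β) ≤ γ, then every point with V(x, y) ≤ c₁ satisfies α x² + β y² ≤ γ, so the derivative of V along the HKB flow is nonnegative there; if c₂ > 0 satisfies 2c₂·min(α/ω², β) ≥ γ, then every point with V(x, y) ≥ c₂ satisfies α x² + β y² ≥ γ, so the derivative of V along the HKB flow is nonpositive there. Hence the annulus {(x, y) : c₁ ≤ V(x, y) ≤ c₂} is a trapping region for the flow whose boundary derivative signs point inward. -/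
/-- **Trapping annulus for the HKB oscillator.**
Let `α, β, γ, ω > 0` and `V(x,y) = (ω² x² + y²)/2`. If `c₁ > 0` satisfies
`2c₁ max(α/ω², β) ≤ γ`, then every point with `V(x,y) ≤ c₁` satisfies
`α x² + β y² ≤ γ`, so the derivative `−(α x² + β y² − γ) y²` of `V` along
the HKB flow is nonnegative there; if `c₂ > 0` satisfies
`2c₂ min(α/ω², β) ≥ γ`, then every point with `V(x,y) ≥ c₂` satisfies
`α x² + β y² ≥ γ`, so that derivative is nonpositive there. Hence the annulus
`{c₁ ≤ V ≤ c₂}` is a trapping region whose boundary derivative signs point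
inward. -/
theorem hkb_trapping_region (α β γ ω : ℝ)
    (hα : 0 < α) (hβ : 0 < β) (hγ : 0 < γ) (hω : 0 < ω) :
    (∀ c₁ : ℝ, 0 < c₁ → 2 * c₁ * max (α / ω ^ 2) β ≤ γ →
      ∀ x y : ℝ, (ω ^ 2 * x ^ 2 + y ^ 2) / 2 ≤ c₁ →
        α * x ^ 2 + β * y ^ 2 ≤ γ ∧
          0 ≤ -(α * x ^ 2 + β * y ^ 2 - γ) * y ^ 2) ∧
    (∀ c₂ : ℝ, 0 < c₂ → γ ≤ 2 * c₂ * min (α / ω ^ 2) β →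
      ∀ x y : ℝ, c₂ ≤ (ω ^ 2 * x ^ 2 + y ^ 2) / 2 →
        γ ≤ α * x ^ 2 + β * y ^ 2 ∧
          -(α * x ^ 2 + β * y ^ 2 - γ) * y ^ 2 ≤ 0) := by

  have hω2 : (0:ℝ) < ω ^ 2 := by positivity
  constructor
  · intro c₁ hc₁ hle x y hV
    have key : α * x ^ 2 + β * y ^ 2 ≤ γ := by
      have h1 : α * x ^ 2 ≤ max (α / ω ^ 2) β * (ω ^ 2 * x ^ 2) := by
        have : α / ω ^ 2 ≤ max (α / ω ^ 2) β := le_max_left _ _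
        have hx : (0:ℝ) ≤ x ^ 2 := sq_nonneg x
        calc α * x ^ 2 = (α / ω ^ 2) * (ω ^ 2 * x ^ 2) := by field_simp
          _ ≤ max (α / ω ^ 2) β * (ω ^ 2 * x ^ 2) := mul_le_mul_of_nonneg_right this (by positivity)
      have h2 : β * y ^ 2 ≤ max (α / ω ^ 2) β * y ^ 2 := by
        nlinarith [le_max_right (α / ω ^ 2) β, sq_nonneg y]
      have hmax : (0:ℝ) < max (α / ω ^ 2) β := lt_max_of_lt_right hβ
      nlinarith
    exact ⟨key, by nlinarith [sq_nonneg y]⟩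
  · intro c₂ hc₂ hge x y hV
    have key : γ ≤ α * x ^ 2 + β * y ^ 2 := by
      have h1 : min (α / ω ^ 2) β * (ω ^ 2 * x ^ 2) ≤ α * x ^ 2 := by
        have : min (α / ω ^ 2) β ≤ α / ω ^ 2 := min_le_left _ _
        calc min (α / ω ^ 2) β * (ω ^ 2 * x ^ 2)
            ≤ (α / ω ^ 2) * (ω ^ 2 * x ^ 2) := mul_le_mul_of_nonneg_right this (by positivity)
          _ = α * x ^ 2 := by field_simp
      have h2 : min (α / ω ^ 2) β * y ^ 2 ≤ β * y ^ 2 := by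
        nlinarith [min_le_right (α / ω ^ 2) β, sq_nonneg y]
      have hmin : (0:ℝ) < min (α / ω ^ 2) β := lt_min (by positivity) hβ
      nlinarith
    exact ⟨key, by nlinarith [sq_nonneg y]⟩
end

section
/- Let α, β, γ, ω > 0 and let (x, y) be any solution of the uncontrolled HKB oscillator on [0, ∞). Then for all t ≥ 0, V(x(t), y(t)) ≤ max( V(x(0), y(0)), γ/(2·min(α/ω², β)) ), where V(x, y) = (ω² x² + y²)/2; in particular every forward solution of the uncontrolled HKB oscillator is bounded. -/
/-- **Forward boundedness of solutions of the HKB oscillator.**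
Let `α, β, γ, ω > 0` and let `(x, y)` be any solution of the uncontrolled HKB
oscillator on `[0, ∞)`. Then for all `t ≥ 0`,
`V(x(t), y(t)) ≤ max(V(x(0), y(0)), γ/(2 min(α/ω², β)))`, where
`V(x, y) = (ω² x² + y²)/2`; in particular every forward solution is bounded. -/
theorem hkb_forward_solutions_bounded (α β γ ω : ℝ)
    (hα : 0 < α) (hβ : 0 < β) (hγ : 0 < γ) (hω : 0 < ω)
    (x y : ℝ → ℝ)
    (hx : ∀ t ∈ Set.Ici (0 : ℝ), HasDerivAt x (y t) t)
    (hy : ∀ t ∈ Set.Ici (0 : ℝ), HasDerivAt y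
      (-(α * (x t) ^ 2 + β * (y t) ^ 2 - γ) * y t - ω ^ 2 * x t) t) :
    ∀ t ≥ (0 : ℝ), (ω ^ 2 * (x t) ^ 2 + (y t) ^ 2) / 2 ≤
      max ((ω ^ 2 * (x 0) ^ 2 + (y 0) ^ 2) / 2)
        (γ / (2 * min (α / ω ^ 2) β)) := by
  intro t ht
  set m : ℝ := min (α / ω ^ 2) β with hm_def
  have hm : 0 < m := lt_min (div_pos hα (pow_pos hω 2)) hβ
  set f : ℝ → ℝ := fun s => (ω ^ 2 * (x s) ^ 2 + (y s) ^ 2) / 2 with hf_def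
  have hfd : ∀ s ∈ Set.Ici (0:ℝ),
      HasDerivAt f (-(α * (x s)^2 + β * (y s)^2 - γ) * (y s)^2) s := by
    intro s hs
    have h := ((((hx s hs).pow 2).const_mul (ω^2)).add ((hy s hs).pow 2)).div_const 2
    refine h.congr_deriv ?_
    push_cast
    ring
  set M : ℝ := max (f 0) (γ / (2 * m)) with hM_def
  show f t ≤ M
  have key : ∀ s ∈ Set.Ici (0:ℝ), M ≤ f s →
      -(α * (x s)^2 + β * (y s)^2 - γ) * (y s)^2 ≤ 0 := by
    intro s _ hfs
    have h1 : γ / (2*m) ≤ f s := le_trans (le_max_right _ _) hfs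
    rw [div_le_iff₀ (by positivity)] at h1
    have h2 : γ ≤ m * (ω^2 * (x s)^2 + (y s)^2) := by
      simp only [hf_def] at h1; nlinarith
    have h3 : m * (ω^2 * (x s)^2) ≤ α * (x s)^2 := by
      have h := mul_le_mul_of_nonneg_right (min_le_left (α / ω^2) β)
        (by positivity : (0:ℝ) ≤ ω^2 * (x s)^2)
      calc m * (ω^2 * (x s)^2) ≤ (α/ω^2) * (ω^2*(x s)^2) := h
        _ = α * (x s)^2 := by field_simp
    have h4 : m * (y s)^2 ≤ β * (y s)^2 :=
      mul_le_mul_of_nonneg_right (min_le_right _ _) (sq_nonneg _)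
    nlinarith [sq_nonneg (y s)]
  by_contra hcon
  push_neg at hcon
  have hcont : ContinuousOn f (Set.Icc 0 t) := fun u hu =>
    ((hfd u (Set.mem_Ici.mpr hu.1)).continuousAt).continuousWithinAt
  set S : Set ℝ := Set.Icc 0 t ∩ f ⁻¹' Set.Iic M with hS_def
  have hS_closed : IsClosed S :=
    hcont.preimage_isClosed_of_isClosed isClosed_Icc isClosed_Iic
  have hne : S.Nonempty := ⟨0, ⟨le_refl 0, ht⟩, Set.mem_preimage.mpr (Set.mem_Iic.mpr (le_max_left _ _))⟩
  have hbdd : BddAbove S := ⟨t, fun u hu => hu.1.2⟩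
  set s : ℝ := sSup S with hs_def
  have hs_mem : s ∈ S := hS_closed.csSup_mem hne hbdd
  have hfsM : f s ≤ M := hs_mem.2
  have hst : s < t := lt_of_le_of_ne hs_mem.1.2 (by
    intro h; rw [h] at hfsM; exact absurd hfsM (not_le.mpr hcon))
  have hs0 : (0:ℝ) ≤ s := hs_mem.1.1
  have hgt : ∀ u ∈ Set.Ioo s t, M ≤ f u := by
    intro u hu
    by_contra hle
    push_neg at hle
    have : u ∈ S := ⟨⟨le_trans hs0 hu.1.le, hu.2.le⟩, hle.le⟩
    exact absurd (le_csSup hbdd this) (not_le.mpr hu.1)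
  have hanti : AntitoneOn f (Set.Icc s t) := by
    apply antitoneOn_of_deriv_nonpos (convex_Icc s t)
    · exact hcont.mono (Set.Icc_subset_Icc hs0 le_rfl)
    · intro u hu
      rw [interior_Icc] at hu
      exact ((hfd u (Set.mem_Ici.mpr (le_trans hs0 hu.1.le))).differentiableAt).differentiableWithinAt
    · intro u hu
      rw [interior_Icc] at hu
      have hu0 : u ∈ Set.Ici (0:ℝ) := Set.mem_Ici.mpr (le_trans hs0 hu.1.le)
      rw [(hfd u hu0).deriv]
      exact key u hu0 (hgt u hu)
  have : f t ≤ f s := hanti ⟨le_rfl, hst.le⟩ ⟨hst.le, le_rfl⟩ hst.le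
  exact absurd (le_trans this hfsM) (not_le.mpr hcon)
end

section
/- With the explicit collocation approximation x̃(t) = x_k + y_k (t − t_k) + (𝒩/𝒟)(t − t_k)² of the optimal trajectory on [t_k, t_{k+1}] (T = t_{k+1} − t_k), the terminal tracking error satisfies |x̃(t_{k+1}) − r̂| = |x_k + T y_k + (𝒩/𝒟) T² − r̂| ≤ T²(1 − θ_p)·|2(x_k − r̂) + T(s_k + s_{k+1})| / |𝒟| + η_m·|ℒ·ℳ| / |𝒟|. In particular, the bound on the tracking error tends to 0 as θ_p → 1 and η_m → 0. -/
/-- **Collocation bound on the terminal tracking (position) error.**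
With the explicit collocation approximation
`x̃(t) = x_k + y_k (t − t_k) + (𝒩/𝒟)(t − t_k)²` of the optimal trajectory on
`[t_k, t_k + T]`, the terminal tracking error satisfies
`|x̃(t_{k+1}) − r̂| = |x_k + T y_k + (𝒩/𝒟) T² − r̂|
  ≤ T²(1 − θₚ)|2(x_k − r̂) + T(s_k + s_{k+1})|/|𝒟| + ηₘ |ℒ ℳ|/|𝒟|`.
In particular, the bound on the tracking error tends to `0` as `θₚ → 1` and
`ηₘ → 0`. -/
theorem collocation_terminal_position_error_bound
    (α β γ ω T ηm θp θσ xk yk rhat sk sk1 L M D N : ℝ)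
    (hT : 0 < T) (hηm : 0 < ηm)
    (hθp0 : 0 ≤ θp) (hθp1 : θp ≤ 1) (hθσ : θσ = 1 - θp)
    (hL : L = T ^ 2 * ω ^ 2 / 2 + α * T ^ 2 * xk * yk + α * T * xk ^ 2
      + 3 * β * T * yk ^ 2 - γ * T + 2)
    (hM : M = 2 * (xk + T * yk - rhat)
      - T ^ 2 * (yk * (α * xk ^ 2 + β * yk ^ 2 - γ) + ω ^ 2 * xk))
    (hD : D = 2 * T ^ 2 * (θp * T + θσ) + 2 * ηm * L) (hD0 : D ≠ 0)
    (hN : N = 2 * T * (((sk + sk1) / 2 - yk) * θσ + (rhat - xk - T * yk) * θp)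
      - ηm * L * ((α * xk ^ 2 + β * yk ^ 2 - γ) * yk + ω ^ 2 * xk)) :
    |xk + T * yk + (N / D) * T ^ 2 - rhat| ≤
        T ^ 2 * (1 - θp) * |2 * (xk - rhat) + T * (sk + sk1)| / |D|
          + ηm * |L * M| / |D| ∧
      Filter.Tendsto (fun p : ℝ × ℝ =>
        T ^ 2 * (1 - p.1) * |2 * (xk - rhat) + T * (sk + sk1)| /
            |2 * T ^ 2 * (p.1 * T + (1 - p.1)) + 2 * p.2 * L|
          + p.2 * |L * M| /
            |2 * T ^ 2 * (p.1 * T + (1 - p.1)) + 2 * p.2 * L|)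
        (nhds (1, 0)) (nhds 0) := by
  have hDpos : 0 < |D| := abs_pos.mpr hD0
  constructor
  · have hnum : D * (xk + T * yk - rhat) + N * T ^ 2 =
        T ^ 2 * (1 - θp) * (2 * (xk - rhat) + T * (sk + sk1)) + ηm * (L * M) := by
      subst hθσ hN hM hD; ring
    have key : xk + T * yk + (N / D) * T ^ 2 - rhat =
        (D * (xk + T * yk - rhat) + N * T ^ 2) / D := by
      field_simp
      ring
    rw [key, hnum, abs_div]
    have h1 : |T ^ 2 * (1 - θp) * (2 * (xk - rhat) + T * (sk + sk1)) + ηm * (L * M)|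
        ≤ T ^ 2 * (1 - θp) * |2 * (xk - rhat) + T * (sk + sk1)| + ηm * |L * M| := by
      refine (abs_add_le _ _).trans ?_
      rw [abs_mul, abs_mul, abs_of_nonneg (by positivity : (0:ℝ) ≤ T ^ 2),
        abs_of_nonneg (by linarith : (0:ℝ) ≤ 1 - θp), abs_mul, abs_of_pos hηm]
    calc |T ^ 2 * (1 - θp) * (2 * (xk - rhat) + T * (sk + sk1)) + ηm * (L * M)| / |D|
        ≤ (T ^ 2 * (1 - θp) * |2 * (xk - rhat) + T * (sk + sk1)| + ηm * |L * M|) / |D| := by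
          gcongr
      _ = _ := by ring
  · have hg : ContinuousAt (fun p : ℝ × ℝ =>
        |2 * T ^ 2 * (p.1 * T + (1 - p.1)) + 2 * p.2 * L|) (1, 0) := by
      fun_prop
    have hg0 : |2 * T ^ 2 * ((1:ℝ) * T + (1 - 1)) + 2 * (0:ℝ) * L| ≠ 0 := by
      simp only [one_mul, sub_self, add_zero, mul_zero, zero_mul]
      positivity
    have hf : ContinuousAt (fun p : ℝ × ℝ =>
        T ^ 2 * (1 - p.1) * |2 * (xk - rhat) + T * (sk + sk1)| /
            |2 * T ^ 2 * (p.1 * T + (1 - p.1)) + 2 * p.2 * L|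
          + p.2 * |L * M| /
            |2 * T ^ 2 * (p.1 * T + (1 - p.1)) + 2 * p.2 * L|) (1, 0) := by
      apply ContinuousAt.add
      · exact ContinuousAt.div (by fun_prop) hg hg0
      · exact ContinuousAt.div (by fun_prop) hg hg0
    have := hf.tendsto
    simpa using this
end

section
/- With the explicit collocation approximation x̃(t) = x_k + y_k (t − t_k) + (𝒩/𝒟)(t − t_k)² of the optimal trajectory on [t_k, t_{k+1}] (T = t_{k+1} − t_k), the terminal velocity error satisfies |x̃′(t_{k+1}) − s_{k+1}| = |y_k + 2𝒩T/𝒟 − s_{k+1}| ≤ (1 − θ_σ)·2T²·|T(y_k − s_{k+1}) + 2(r̂ − x_k − T y_k)| / |𝒟| + θ_σ·2T²·|s_k − y_k| / |𝒟| + 2η_m·|ℒ·𝒫| / |𝒟|, where 𝒫 = y_k − s_{k+1} − T[(α x_k² + β y_k² − γ) y_k + ω² x_k]. In particular, the bound on the velocity error tends to 0 as θ_σ → 1, η_m → 0 and s_k = y_k. -/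
/-- **Collocation bound on the terminal velocity error.**
With the explicit collocation approximation
`x̃(t) = x_k + y_k (t − t_k) + (𝒩/𝒟)(t − t_k)²` of the optimal trajectory on
`[t_k, t_k + T]`, the terminal velocity error satisfies
`|x̃′(t_{k+1}) − s_{k+1}| = |y_k + 2𝒩T/𝒟 − s_{k+1}|
  ≤ (1 − θσ) 2T² |T(y_k − s_{k+1}) + 2(r̂ − x_k − T y_k)|/|𝒟|
    + θσ 2T² |s_k − y_k|/|𝒟| + 2ηₘ |ℒ 𝒫|/|𝒟|`,
where `𝒫 = y_k − s_{k+1} − T[(α x_k² + β y_k² − γ) y_k + ω² x_k]`.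
In particular, the bound on the velocity error tends to `0` as `θσ → 1`,
`ηₘ → 0` and `s_k = y_k`. -/
theorem collocation_terminal_velocity_error_bound
    (α β γ ω T ηm θp θσ xk yk rhat sk sk1 L D N P : ℝ)
    (hT : 0 < T) (hηm : 0 < ηm)
    (hθp0 : 0 ≤ θp) (hθp1 : θp ≤ 1) (hθσ : θσ = 1 - θp)
    (hL : L = T ^ 2 * ω ^ 2 / 2 + α * T ^ 2 * xk * yk + α * T * xk ^ 2
      + 3 * β * T * yk ^ 2 - γ * T + 2)
    (hD : D = 2 * T ^ 2 * (θp * T + θσ) + 2 * ηm * L) (hD0 : D ≠ 0)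
    (hN : N = 2 * T * (((sk + sk1) / 2 - yk) * θσ + (rhat - xk - T * yk) * θp)
      - ηm * L * ((α * xk ^ 2 + β * yk ^ 2 - γ) * yk + ω ^ 2 * xk))
    (hP : P = yk - sk1
      - T * ((α * xk ^ 2 + β * yk ^ 2 - γ) * yk + ω ^ 2 * xk)) :
    |yk + 2 * N * T / D - sk1| ≤
        (1 - θσ) * (2 * T ^ 2)
            * |T * (yk - sk1) + 2 * (rhat - xk - T * yk)| / |D|
          + θσ * (2 * T ^ 2) * |sk - yk| / |D|
          + 2 * ηm * |L * P| / |D| ∧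
      (sk = yk →
        Filter.Tendsto (fun p : ℝ × ℝ =>
          (1 - p.1) * (2 * T ^ 2)
              * |T * (yk - sk1) + 2 * (rhat - xk - T * yk)| /
              |2 * T ^ 2 * ((1 - p.1) * T + p.1) + 2 * p.2 * L|
            + p.1 * (2 * T ^ 2) * |sk - yk| /
              |2 * T ^ 2 * ((1 - p.1) * T + p.1) + 2 * p.2 * L|
            + 2 * p.2 * |L * P| /
              |2 * T ^ 2 * ((1 - p.1) * T + p.1) + 2 * p.2 * L|)
          (nhds (1, 0)) (nhds 0)) := by
  have hθσ0 : 0 ≤ θσ := by rw [hθσ]; linarith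
  constructor
  · have key : θp * (2 * T ^ 2) * (T * (yk - sk1) + 2 * (rhat - xk - T * yk))
          + θσ * (2 * T ^ 2) * (sk - yk) + 2 * ηm * (L * P)
        = (yk - sk1) * D + 2 * N * T := by
      subst hθσ hL hN hP hD
      ring
    have hA : yk + 2 * N * T / D - sk1 =
        (θp * (2 * T ^ 2) * (T * (yk - sk1) + 2 * (rhat - xk - T * yk))
          + θσ * (2 * T ^ 2) * (sk - yk) + 2 * ηm * (L * P)) / D := by
      rw [key, add_div, mul_div_cancel_right₀ _ hD0]
      ring
    have hθp' : 1 - θσ = θp := by rw [hθσ]; ring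
    rw [hA, abs_div, hθp', ← add_div, ← add_div]
    rw [div_le_div_iff_of_pos_right (abs_pos.mpr hD0)]
    calc |θp * (2 * T ^ 2) * (T * (yk - sk1) + 2 * (rhat - xk - T * yk))
          + θσ * (2 * T ^ 2) * (sk - yk) + 2 * ηm * (L * P)|
        ≤ |θp * (2 * T ^ 2) * (T * (yk - sk1) + 2 * (rhat - xk - T * yk))|
          + |θσ * (2 * T ^ 2) * (sk - yk)| + |2 * ηm * (L * P)| :=
          abs_add_three _ _ _
      _ = θp * (2 * T ^ 2) * |T * (yk - sk1) + 2 * (rhat - xk - T * yk)|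
          + θσ * (2 * T ^ 2) * |sk - yk| + 2 * ηm * |L * P| := by
          rw [abs_mul (θp * (2 * T ^ 2)), abs_mul (θσ * (2 * T ^ 2)),
            abs_mul (2 * ηm),
            abs_of_nonneg (mul_nonneg hθp0 (by positivity)),
            abs_of_nonneg (mul_nonneg hθσ0 (by positivity)),
            abs_of_nonneg (by positivity : (0:ℝ) ≤ 2 * ηm)]
  · intro hsk
    have hd0 : |2 * T ^ 2 * ((1 - ((1:ℝ),(0:ℝ)).1) * T + ((1:ℝ),(0:ℝ)).1)
        + 2 * ((1:ℝ),(0:ℝ)).2 * L| ≠ 0 := by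
      simp only [abs_ne_zero]
      norm_num
      positivity
    have hden : ContinuousAt (fun p : ℝ × ℝ =>
        |2 * T ^ 2 * ((1 - p.1) * T + p.1) + 2 * p.2 * L|) ((1:ℝ), (0:ℝ)) := by
      fun_prop
    have hc : ContinuousAt (fun p : ℝ × ℝ =>
        (1 - p.1) * (2 * T ^ 2)
            * |T * (yk - sk1) + 2 * (rhat - xk - T * yk)| /
            |2 * T ^ 2 * ((1 - p.1) * T + p.1) + 2 * p.2 * L|
          + p.1 * (2 * T ^ 2) * |sk - yk| /
            |2 * T ^ 2 * ((1 - p.1) * T + p.1) + 2 * p.2 * L|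
          + 2 * p.2 * |L * P| /
            |2 * T ^ 2 * ((1 - p.1) * T + p.1) + 2 * p.2 * L|) ((1:ℝ), (0:ℝ)) := by
      exact ((((by fun_prop : ContinuousAt (fun p : ℝ × ℝ => (1 - p.1) * (2 * T ^ 2)
          * |T * (yk - sk1) + 2 * (rhat - xk - T * yk)|) _).div hden hd0).add
        (((by fun_prop : ContinuousAt (fun p : ℝ × ℝ => p.1 * (2 * T ^ 2) * |sk - yk|) _)).div
          hden hd0)).add
        (((by fun_prop : ContinuousAt (fun p : ℝ × ℝ => 2 * p.2 * |L * P|) _)).div hden hd0))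
    have ht := hc.tendsto
    convert ht using 2
    simp [hsk]
end
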